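/- Fix real parameters θ and γ with 0 < θ < 1 and 1 < γ < (1+θ)²/(4θ), and let U(x) = −x²/2 + θx³/3 + γx − γ·ln(x+1) on (−1, ∞). Then U has a strict local minimum at x₁ = 0, a strict local maximum at x₂ = (1−θ−√((1+θ)²−4γθ))/(2θ), and a strict local minimum at x₃ = (1−θ+√((1+θ)²−4γθ))/(2θ). In other words, the potential of the tumor growth model is bistable, with minima at the tumor-free state x₁ and the stable tumor state x₃ and a maximum at the unstable state x₂. -/

import Mathlib

open Filter Topology Set

private noncomputable def Upot (θ γ : ℝ) (x : ℝ) : ℝ :=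
  -x ^ 2 / 2 + θ * x ^ 3 / 3 + γ * x - γ * Real.log (x + 1)

private lemma Upot_hasDerivAt (θ γ a b : ℝ)
    (hq : ∀ x : ℝ, θ * x * (x - a) * (x - b) = θ * x ^ 3 + (θ - 1) * x ^ 2 + (γ - 1) * x)
    {x : ℝ} (hx : -1 < x) :
    HasDerivAt (Upot θ γ) (θ * x * (x - a) * (x - b) / (x + 1)) x := by
  have hx1 : x + 1 ≠ 0 := by linarith
  have h1 : HasDerivAt (fun x : ℝ => -x ^ 2 / 2) (-x) x := by
    have := ((hasDerivAt_pow 2 x).neg).div_const 2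
    exact this.congr_deriv (by push_cast; ring)
  have h2 : HasDerivAt (fun x : ℝ => θ * x ^ 3 / 3) (θ * x ^ 2) x := by
    have := ((hasDerivAt_pow 3 x).const_mul θ).div_const 3
    exact this.congr_deriv (by push_cast; ring)
  have h3 : HasDerivAt (fun x : ℝ => γ * x) γ x := by
    simpa using (hasDerivAt_id x).const_mul γ
  have h4 : HasDerivAt (fun x : ℝ => Real.log (x + 1)) (1 / (x + 1)) x := by
    have := (Real.hasDerivAt_log hx1).comp x ((hasDerivAt_id x).add_const 1)
    exact this.congr_deriv (by simp)
  have h := ((h1.add h2).add h3).sub (h4.const_mul γ)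
  refine h.congr_deriv ?_
  symm
  rw [div_eq_iff hx1]
  field_simp
  linear_combination hq x

private lemma tumor_aux (θ γ a b : ℝ) (hθ : 0 < θ) (ha : 0 < a) (hab : a < b)
    (hq : ∀ x : ℝ, θ * x * (x - a) * (x - b) = θ * x ^ 3 + (θ - 1) * x ^ 2 + (γ - 1) * x) :
    (∀ᶠ x in 𝓝[≠] (0 : ℝ), Upot θ γ 0 < Upot θ γ x) ∧
    (∀ᶠ x in 𝓝[≠] a, Upot θ γ x < Upot θ γ a) ∧
    (∀ᶠ x in 𝓝[≠] b, Upot θ γ b < Upot θ γ x) := by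
  have hb : 0 < b := lt_trans ha hab
  have hcont : ∀ s : Set ℝ, s ⊆ Ioi (-1 : ℝ) → ContinuousOn (Upot θ γ) s := fun s hs x hx =>
    (Upot_hasDerivAt θ γ a b hq (hs hx)).continuousAt.continuousWithinAt
  have hderiv : ∀ x : ℝ, -1 < x → deriv (Upot θ γ) x = θ * x * (x - a) * (x - b) / (x + 1) :=
    fun x hx => (Upot_hasDerivAt θ γ a b hq hx).deriv
  -- strict anti on [-1/2, 0]
  have anti1 : StrictAntiOn (Upot θ γ) (Icc (-(2⁻¹ : ℝ)) 0) := by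
    apply strictAntiOn_of_deriv_neg (convex_Icc _ _)
      (hcont _ (fun x hx => by simp only [mem_Icc, mem_Ioi] at *; linarith [hx.1]))
    intro x hx
    rw [interior_Icc] at hx
    obtain ⟨h1, h2⟩ := hx
    rw [hderiv x (by linarith)]
    apply div_neg_of_neg_of_pos _ (by linarith)
    nlinarith [mul_pos (mul_pos (mul_pos hθ (by linarith : (0:ℝ) < -x))
      (by linarith : (0:ℝ) < a - x)) (by linarith : (0:ℝ) < b - x)]
  have mono2 : StrictMonoOn (Upot θ γ) (Icc (0 : ℝ) a) := by
    apply strictMonoOn_of_deriv_pos (convex_Icc _ _)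
      (hcont _ (fun x hx => by simp only [mem_Icc, mem_Ioi] at *; linarith [hx.1]))
    intro x hx
    rw [interior_Icc] at hx
    obtain ⟨h1, h2⟩ := hx
    rw [hderiv x (by linarith)]
    apply div_pos _ (by linarith)
    have : θ * x * (x - a) * (x - b) = θ * x * (a - x) * (b - x) := by ring
    rw [this]
    exact mul_pos (mul_pos (mul_pos hθ h1) (by linarith)) (by linarith)
  have anti3 : StrictAntiOn (Upot θ γ) (Icc a b) := by
    apply strictAntiOn_of_deriv_neg (convex_Icc _ _)
      (hcont _ (fun x hx => by simp only [mem_Icc, mem_Ioi] at *; linarith [hx.1]))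
    intro x hx
    rw [interior_Icc] at hx
    obtain ⟨h1, h2⟩ := hx
    rw [hderiv x (by linarith)]
    apply div_neg_of_neg_of_pos _ (by linarith)
    nlinarith [mul_pos (mul_pos (mul_pos hθ (by linarith : (0:ℝ) < x))
      (by linarith : (0:ℝ) < x - a)) (by linarith : (0:ℝ) < b - x)]
  have mono4 : StrictMonoOn (Upot θ γ) (Icc b (b + 1)) := by
    apply strictMonoOn_of_deriv_pos (convex_Icc _ _)
      (hcont _ (fun x hx => by simp only [mem_Icc, mem_Ioi] at *; linarith [hx.1]))
    intro x hx
    rw [interior_Icc] at hx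
    obtain ⟨h1, h2⟩ := hx
    rw [hderiv x (by linarith)]
    apply div_pos _ (by linarith)
    exact mul_pos (mul_pos (mul_pos hθ (by linarith)) (by linarith)) (by linarith)
  refine ⟨?_, ?_, ?_⟩
  · have hmem : Ioo (-(2⁻¹ : ℝ)) a ∈ 𝓝 (0 : ℝ) := Ioo_mem_nhds (by norm_num) ha
    filter_upwards [self_mem_nhdsWithin, mem_nhdsWithin_of_mem_nhds hmem] with x hx0 hxI
    have hne : x ≠ 0 := by simpa using hx0
    rcases hne.lt_or_gt with h | h
    · exact anti1 ⟨hxI.1.le, h.le⟩ ⟨by norm_num, le_rfl⟩ h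
    · exact mono2 ⟨le_rfl, ha.le⟩ ⟨h.le, hxI.2.le⟩ h
  · have hmem : Ioo (0 : ℝ) b ∈ 𝓝 a := Ioo_mem_nhds ha hab
    filter_upwards [self_mem_nhdsWithin, mem_nhdsWithin_of_mem_nhds hmem] with x hx0 hxI
    have hne : x ≠ a := by simpa using hx0
    rcases hne.lt_or_gt with h | h
    · exact mono2 ⟨hxI.1.le, h.le⟩ ⟨ha.le, le_rfl⟩ h
    · exact anti3 ⟨le_rfl, hab.le⟩ ⟨h.le, hxI.2.le⟩ h
  · have hmem : Ioo a (b + 1) ∈ 𝓝 b := Ioo_mem_nhds hab (by linarith)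
    filter_upwards [self_mem_nhdsWithin, mem_nhdsWithin_of_mem_nhds hmem] with x hx0 hxI
    have hne : x ≠ b := by simpa using hx0
    rcases hne.lt_or_gt with h | h
    · exact anti3 ⟨hxI.1.le, h.le⟩ ⟨hab.le, le_rfl⟩ h
    · exact mono4 ⟨le_rfl, by linarith⟩ ⟨h.le, hxI.2.le⟩ h

/-- The potential `U(x) = -x²/2 + θx³/3 + γx - γ·ln(x+1)` of the tumor growth
model is bistable: it has a strict local minimum at the tumor-free state
`x₁ = 0`, a strict local maximum at the unstable state
`x₂ = (1-θ-√((1+θ)²-4γθ))/(2θ)`, and a strict local minimum at the stable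
tumor state `x₃ = (1-θ+√((1+θ)²-4γθ))/(2θ)`. -/
theorem tumor_potential_bistable (θ γ : ℝ) (hθ0 : 0 < θ) (hθ1 : θ < 1)
    (hγ1 : 1 < γ) (hγ2 : γ < (1 + θ) ^ 2 / (4 * θ)) :
    (∀ᶠ x in 𝓝[≠] (0 : ℝ),
        -(0:ℝ) ^ 2 / 2 + θ * 0 ^ 3 / 3 + γ * 0 - γ * Real.log (0 + 1) <
          -x ^ 2 / 2 + θ * x ^ 3 / 3 + γ * x - γ * Real.log (x + 1)) ∧
    (∀ᶠ x in 𝓝[≠] ((1 - θ - Real.sqrt ((1 + θ) ^ 2 - 4 * γ * θ)) / (2 * θ)),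
        -x ^ 2 / 2 + θ * x ^ 3 / 3 + γ * x - γ * Real.log (x + 1) <
          -((1 - θ - Real.sqrt ((1 + θ) ^ 2 - 4 * γ * θ)) / (2 * θ)) ^ 2 / 2 +
            θ * ((1 - θ - Real.sqrt ((1 + θ) ^ 2 - 4 * γ * θ)) / (2 * θ)) ^ 3 / 3 +
            γ * ((1 - θ - Real.sqrt ((1 + θ) ^ 2 - 4 * γ * θ)) / (2 * θ)) -
            γ * Real.log ((1 - θ - Real.sqrt ((1 + θ) ^ 2 - 4 * γ * θ)) / (2 * θ) + 1)) ∧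
    (∀ᶠ x in 𝓝[≠] ((1 - θ + Real.sqrt ((1 + θ) ^ 2 - 4 * γ * θ)) / (2 * θ)),
        -((1 - θ + Real.sqrt ((1 + θ) ^ 2 - 4 * γ * θ)) / (2 * θ)) ^ 2 / 2 +
            θ * ((1 - θ + Real.sqrt ((1 + θ) ^ 2 - 4 * γ * θ)) / (2 * θ)) ^ 3 / 3 +
            γ * ((1 - θ + Real.sqrt ((1 + θ) ^ 2 - 4 * γ * θ)) / (2 * θ)) -
            γ * Real.log ((1 - θ + Real.sqrt ((1 + θ) ^ 2 - 4 * γ * θ)) / (2 * θ) + 1) <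
          -x ^ 2 / 2 + θ * x ^ 3 / 3 + γ * x - γ * Real.log (x + 1)) := by
  have hD : 0 < (1 + θ) ^ 2 - 4 * γ * θ := by
    have h := (lt_div_iff₀ (by positivity : (0:ℝ) < 4 * θ)).mp hγ2
    nlinarith
  set s : ℝ := Real.sqrt ((1 + θ) ^ 2 - 4 * γ * θ) with hs_def
  have hs2 : s ^ 2 = (1 + θ) ^ 2 - 4 * γ * θ := Real.sq_sqrt hD.le
  have hspos : 0 < s := Real.sqrt_pos.mpr hD
  have hslt : s < 1 - θ := by nlinarith [hs2, hspos]
  have ha : 0 < (1 - θ - s) / (2 * θ) := by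
    apply div_pos (by linarith) (by linarith)
  have hab : (1 - θ - s) / (2 * θ) < (1 - θ + s) / (2 * θ) :=
    (div_lt_div_iff_of_pos_right (by linarith)).mpr (by linarith)
  have hq : ∀ x : ℝ, θ * x * (x - (1 - θ - s) / (2 * θ)) * (x - (1 - θ + s) / (2 * θ)) =
      θ * x ^ 3 + (θ - 1) * x ^ 2 + (γ - 1) * x := by
    have hθne : θ ≠ 0 := ne_of_gt hθ0
    intro x
    field_simp
    linear_combination (-x) * hs2
  exact tumor_aux θ γ _ _ hθ0 ha hab hq
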